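/- Let P ∈ E[0,1]²ₙ, let φ_marg ∈ Σ_{n−1} satisfy φ_marg#U = P_marg (the marginal of P along the first coordinate), and for 0 ≤ i ≤ n−1 let φ_i ∈ Σ_{n−1} satisfy φ_i#U = P_i (the n-tiled histogram on [0,1] that is the marginal of P along the second coordinate conditioned on the first coordinate lying in [i/n,(i+1)/n]). Then for every s ∈ ℕ, the map φ: [0,1] → [0,1]² defined by φ(x) = (φ_marg(x), Σ_{i=0}^{n−1} φ_i(g_s(n·φ_marg(x) − i))) satisfies W(P, φ#U) ≤ 2√2/(n·2^s). -/

import Mathlib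

open MeasureTheory Set ENNReal

noncomputable section

/-- `π` is a coupling of `μ` and `ν`. -/
def IsCoupling {E : Type*} [MeasurableSpace E] (μ ν : Measure E) (π : Measure (E × E)) : Prop :=
  π.map Prod.fst = μ ∧ π.map Prod.snd = ν

/-- The Wasserstein distance `W(μ,ν) = inf over couplings π of ∫ ‖x - y‖ dπ(x,y)`. -/
def wass {E : Type*} [MeasurableSpace E] [PseudoEMetricSpace E] (μ ν : Measure E) : ℝ≥0∞ :=
  ⨅ (π : Measure (E × E)) (_ : IsCoupling μ ν π), ∫⁻ p, edist p.1 p.2 ∂π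

/-- The uniform probability distribution on `[0,1]`. -/
def Uniform01 : Measure ℝ := volume.restrict (Set.Icc 0 1)

/-- `f` restricted to `[0,1]` is continuous piecewise affine with at most `m` breakpoints
in `(0,1)`: there is a monotone subdivision `0 = t_0 ≤ t_1 ≤ ⋯ ≤ t_{m+1} = 1` of `[0,1]`
such that `f` is affine on each piece `[t_i, t_{i+1}]`. -/
def PiecewiseAffineOn (f : ℝ → ℝ) (m : ℕ) : Prop :=
  ∃ t : Fin (m + 2) → ℝ, Monotone t ∧ t 0 = 0 ∧ t (Fin.last (m + 1)) = 1 ∧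
    ∀ i : Fin (m + 1), ∃ a b : ℝ,
      ∀ x ∈ Set.Icc (t i.castSucc) (t i.succ), f x = a * x + b

/-- The triangular function `g(x) = 2x` on `[0,1/2]`, `g(x) = 2 - 2x` on `[1/2,1]`. -/
def g : ℝ → ℝ := fun x => if x ≤ 1 / 2 then 2 * x else 2 - 2 * x

/-- The `n`-tiled histogram measure on `[0,1]` with weights `w`. -/
def hist1M (n : ℕ) (w : Fin n → ℝ) : Measure ℝ :=
  volume.withDensity fun x =>
    ∑ k : Fin n, Set.indicator (Set.Icc ((k : ℝ) / n) (((k : ℝ) + 1) / n))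
      (fun _ => ENNReal.ofReal (w k)) x

/-- The tile `c_k = [k₁/n,(k₁+1)/n] × [k₂/n,(k₂+1)/n]` in `[0,1]²`. -/
def tile2 (n : ℕ) (k1 k2 : Fin n) : Set (EuclideanSpace ℝ (Fin 2)) :=
  {x | x 0 ∈ Set.Icc ((k1 : ℝ) / n) (((k1 : ℝ) + 1) / n) ∧
       x 1 ∈ Set.Icc ((k2 : ℝ) / n) (((k2 : ℝ) + 1) / n)}

/-- The `n`-tiled histogram measure on `[0,1]²` with weights `w`. -/
def hist2M (n : ℕ) (w : Fin n → Fin n → ℝ) : Measure (EuclideanSpace ℝ (Fin 2)) :=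
  volume.withDensity fun x =>
    ∑ k1 : Fin n, ∑ k2 : Fin n,
      Set.indicator (tile2 n k1 k2) (fun _ => ENNReal.ofReal (w k1 k2)) x

namespace WBC


instance : IsProbabilityMeasure Uniform01 :=
  ⟨by rw [Uniform01, Measure.restrict_apply_univ]; simp [Real.volume_Icc]⟩

lemma measurable_g : Measurable g := by
  unfold g
  exact Measurable.ite (measurableSet_le measurable_id measurable_const)
    (measurable_const.mul measurable_id)
    (measurable_const.sub (measurable_const.mul measurable_id))

lemma measurable_gIter (s : ℕ) : Measurable (g^[s]) := by
  induction s with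
  | zero => simpa using measurable_id
  | succ s ih => rw [Function.iterate_succ]; exact ih.comp measurable_g

lemma g_mem {x : ℝ} (hx : x ∈ Icc (0:ℝ) 1) : g x ∈ Icc (0:ℝ) 1 := by
  obtain ⟨h0, h1⟩ := hx
  unfold g
  split_ifs with h
  · constructor <;> nlinarith
  · constructor <;> nlinarith

lemma gIter_mem (s : ℕ) {x : ℝ} (hx : x ∈ Icc (0:ℝ) 1) : g^[s] x ∈ Icc (0:ℝ) 1 := by
  induction s with
  | zero => simpa using hx
  | succ s ih => rw [Function.iterate_succ_apply']; exact g_mem ih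




lemma g_eq_left {t : ℝ} (ht : t ≤ 1/2) : g t = 2 * t := by
  show (if t ≤ 1/2 then 2*t else 2 - 2*t) = 2*t
  rw [if_pos ht]

lemma g_eq_right {t : ℝ} (ht : 1/2 ≤ t) : g t = 2 - 2 * t := by
  show (if t ≤ 1/2 then 2*t else 2 - 2*t) = 2 - 2*t
  rcases eq_or_lt_of_le ht with h | h
  · rw [if_pos h.symm.le, ← h]; norm_num
  · rw [if_neg (by linarith)]

/-- Explicit formula of `g^[s]` on the dyadic interval `[l/2^s, (l+1)/2^s]`. -/
lemma gIter_formula : ∀ (s : ℕ) (l : ℕ), l < 2^s → ∀ t : ℝ,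
    t ∈ Icc ((l:ℝ)/2^s) (((l:ℝ)+1)/2^s) →
    g^[s] t = if Even l then 2^s * t - l else ((l:ℝ)+1) - 2^s * t := by
  intro s
  induction s with
  | zero =>
    intro l hl t ht
    interval_cases l
    norm_num
  | succ s ih =>
    intro l hl t ht
    have h2s : (0:ℝ) < 2^s := by positivity
    have h2s1 : (0:ℝ) < 2^(s+1) := by positivity
    have hps : (2:ℝ)^(s+1) = 2 * 2^s := by rw [pow_succ]; ring
    obtain ⟨ht0, ht1⟩ := ht
    have hA : (l:ℝ) ≤ t * 2^(s+1) := (div_le_iff₀ h2s1).mp ht0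
    have hB : t * 2^(s+1) ≤ (l:ℝ)+1 := by
      rw [← le_div_iff₀ h2s1]; exact ht1
    rw [Function.iterate_succ_apply]
    rcases lt_or_ge l (2^s) with hcase | hcase
    · have hl1 : ((l:ℝ)+1) ≤ 2^s := by exact_mod_cast Nat.succ_le_of_lt hcase
      have hle : t ≤ 1/2 := by nlinarith
      have hmem : 2*t ∈ Icc ((l:ℝ)/2^s) (((l:ℝ)+1)/2^s) := by
        constructor
        · rw [div_le_iff₀ h2s]; nlinarith
        · rw [le_div_iff₀ h2s]; nlinarith
      rw [g_eq_left hle, ih l hcase (2*t) hmem]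
      split_ifs with h
      · rw [hps]; ring
      · rw [hps]; ring
    · have hge : 1/2 ≤ t := by
        have : (2:ℝ)^s ≤ l := by exact_mod_cast hcase
        nlinarith
      set l' : ℕ := 2^(s+1) - (l+1) with hl'def
      have hlt : l + 1 ≤ 2^(s+1) := hl
      have hl' : l' < 2^s := by
        have h2 : 2^(s+1) = 2 * 2^s := by rw [pow_succ]; ring
        have h2pos : 0 < 2^s := Nat.pow_pos (by norm_num)
        omega
      have hcast : (l' : ℝ) = 2^(s+1) - ((l:ℝ)+1) := by
        rw [hl'def]
        push_cast [Nat.cast_sub hlt]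
        ring
      have hmem : 2 - 2*t ∈ Icc ((l':ℝ)/2^s) (((l':ℝ)+1)/2^s) := by
        rw [hcast]
        constructor
        · rw [div_le_iff₀ h2s]; nlinarith
        · rw [le_div_iff₀ h2s]; nlinarith
      have hpar : (Even l') ↔ ¬ Even l := by
        rw [hl'def, Nat.even_sub hlt]
        have h2e : Even (2^(s+1)) := by
          have h2 : 2^(s+1) = 2*2^s := by rw [pow_succ]; ring
          exact h2 ▸ even_two_mul _
        simp [h2e, Nat.even_add_one]
      rw [g_eq_right hge, ih l' hl' (2-2*t) hmem]
      rcases Nat.even_or_odd l with hev | hodd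
      · rw [if_neg (fun h => (hpar.mp h) hev), if_pos hev, hcast, hps]; ring
      · have hne : ¬ Even l := Nat.not_even_iff_odd.mpr hodd
        rw [if_pos (hpar.mpr hne), if_neg hne, hcast, hps]; ring



lemma exists_measurable_agree {f : ℝ → ℝ} {m : ℕ} (h : PiecewiseAffineOn f m) :
    ∃ F : ℝ → ℝ, Measurable F ∧ ∀ x ∈ Icc (0:ℝ) 1, F x = f x := by
  classical
  obtain ⟨t, hmono, ht0, ht1, haff⟩ := h
  choose a b hab using haff
  refine ⟨fun x => (∑ i : Fin (m+1),
      Set.indicator (Ico (t i.castSucc) (t i.succ)) (fun y => a i * y + b i) x)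
      + Set.indicator {(1:ℝ)} (fun _ => f 1) x, ?_, ?_⟩
  · apply Measurable.add
    · exact Finset.measurable_sum _ fun i _ =>
        ((measurable_const.mul measurable_id).add measurable_const).indicator measurableSet_Ico
    · exact measurable_const.indicator (measurableSet_singleton 1)
  · intro x hx
    dsimp only
    rcases eq_or_lt_of_le hx.2 with hx1 | hx1
    · -- x = 1
      have hzero : ∀ i : Fin (m+1), Set.indicator (Ico (t i.castSucc) (t i.succ))
          (fun y => a i * y + b i) x = 0 := by
        intro i
        apply Set.indicator_of_notMem
        rintro ⟨-, hlt⟩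
        have h2 : t i.succ ≤ 1 := ht1 ▸ hmono (Fin.le_last _)
        have hxlt : x < 1 := lt_of_lt_of_le hlt h2
        rw [hx1] at hxlt; exact lt_irrefl 1 hxlt
      rw [Finset.sum_congr rfl (fun i _ => hzero i), Finset.sum_const_zero, zero_add, hx1]
      exact Set.indicator_of_mem rfl _
    · -- x < 1
      have hsing : Set.indicator {(1:ℝ)} (fun _ => f 1) x = 0 :=
        Set.indicator_of_notMem (by simpa using ne_of_lt hx1) _
      -- find the piece containing x
      have hS : (Finset.univ.filter (fun i : Fin (m+1) => t i.castSucc ≤ x)).Nonempty := by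
        refine ⟨0, Finset.mem_filter.mpr ⟨Finset.mem_univ _, ?_⟩⟩
        have h00 : ((0:Fin (m+1)).castSucc) = (0 : Fin (m+2)) := rfl
        rw [h00, ht0]; exact hx.1
      set i₀ := (Finset.univ.filter (fun i : Fin (m+1) => t i.castSucc ≤ x)).max' hS with hi₀
      have hi₀mem : t i₀.castSucc ≤ x := by
        have := (Finset.univ.filter (fun i : Fin (m+1) => t i.castSucc ≤ x)).max'_mem hS
        exact (Finset.mem_filter.mp this).2
      have hi₀lt : x < t i₀.succ := by
        by_contra hcon
        push_neg at hcon
        rcases eq_or_lt_of_le (Fin.le_last i₀) with hlast | hlast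
        · have hs1 : t i₀.succ = 1 := by rw [hlast, Fin.succ_last, ht1]
          rw [hs1] at hcon; exact absurd (lt_of_lt_of_le hx1 hcon) (lt_irrefl _)
        · -- i₀ + 1 is also in the filter, contradicting maximality
          have hval1 : ((i₀ + 1 : Fin (m+1)) : ℕ) = (i₀ : ℕ) + 1 :=
            Fin.val_add_one_of_lt hlast
          have hi1 : (i₀ + 1 : Fin (m+1)).castSucc = i₀.succ := by
            apply Fin.ext
            simp only [Fin.coe_castSucc, Fin.val_succ, hval1]
          have hmem1 : (i₀ + 1 : Fin (m+1)) ∈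
              Finset.univ.filter (fun i : Fin (m+1) => t i.castSucc ≤ x) := by
            refine Finset.mem_filter.mpr ⟨Finset.mem_univ _, ?_⟩
            rw [hi1]; exact hcon
          have hle := Finset.le_max' _ _ hmem1
          rw [← hi₀] at hle
          have hblt : i₀ < i₀ + 1 := by
            rw [Fin.lt_def, hval1]; omega
          exact absurd (lt_of_lt_of_le hblt hle) (lt_irrefl _)
      have hval : ∀ i : Fin (m+1), i ≠ i₀ → Set.indicator (Ico (t i.castSucc) (t i.succ))
          (fun y => a i * y + b i) x = 0 := by
        intro i hi
        apply Set.indicator_of_notMem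
        rintro ⟨hge, hlt⟩
        rcases lt_or_gt_of_ne (fun hc => hi (Fin.ext hc) : (i:ℕ) ≠ (i₀:ℕ)) with hlt2 | hgt2
        · -- i < i₀ : t i.succ ≤ t i₀.castSucc
          have : t i.succ ≤ t i₀.castSucc := by
            apply hmono
            simp only [Fin.le_def, Fin.val_succ, Fin.coe_castSucc]
            omega
          exact absurd (lt_of_lt_of_le hlt (le_trans this hi₀mem)) (lt_irrefl _)
        · -- i₀ < i : t i₀.succ ≤ t i.castSucc
          have : t i₀.succ ≤ t i.castSucc := by
            apply hmono
            simp only [Fin.le_def, Fin.val_succ, Fin.coe_castSucc]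
            omega
          exact absurd (lt_of_lt_of_le hi₀lt (le_trans this hge)) (lt_irrefl _)
      rw [hsing, add_zero, Finset.sum_eq_single i₀ (fun i _ hi => hval i hi)
        (fun hc => absurd (Finset.mem_univ i₀) hc),
        Set.indicator_of_mem (Set.mem_Ico.mpr ⟨hi₀mem, hi₀lt⟩)]
      exact (hab i₀ x ⟨hi₀mem, le_of_lt hi₀lt⟩).symm

lemma map_volume_affine {c : ℝ} (hc : c ≠ 0) (d : ℝ) :
    Measure.map (fun x => c*x + d) volume = ENNReal.ofReal |c⁻¹| • volume := by
  have h1 : (fun x : ℝ => c*x + d) = (fun x => x + d) ∘ (fun x => c * x) := rfl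
  rw [h1, ← Measure.map_map (measurable_add_const d) (measurable_const_mul c)]
  have h2 : Measure.map (fun x : ℝ => c * x) volume = ENNReal.ofReal |c⁻¹| • volume := by
    simpa using Real.map_volume_mul_left hc
  rw [h2, Measure.map_smul]
  congr 1
  exact map_add_right_eq_self volume d

lemma volume_preimage_affine {c : ℝ} (hc : c ≠ 0) (d : ℝ) {A : Set ℝ} (hA : MeasurableSet A) :
    volume ((fun x => c*x + d) ⁻¹' A) = ENNReal.ofReal |c⁻¹| * volume A := by
  have := Measure.map_apply (μ := volume) ((measurable_const_mul c).add_const d) hA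
  rw [map_volume_affine hc d] at this
  rw [← this]
  rfl

lemma lintegral_affine {c : ℝ} (hc : c ≠ 0) (d : ℝ) {f : ℝ → ℝ≥0∞} (hf : Measurable f)
    {A : Set ℝ} (hA : MeasurableSet A) :
    ∫⁻ x in (fun x => c*x + d) ⁻¹' A, f (c*x + d) ∂volume
      = ENNReal.ofReal |c⁻¹| * ∫⁻ y in A, f y ∂volume := by
  have h := setLIntegral_map (μ := volume) hA hf ((measurable_const_mul c).add_const d)
  rw [map_volume_affine hc d, Measure.restrict_smul, lintegral_smul_measure] at h
  exact h.symm


end WBC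

namespace WBC

/-- Integral of `f ∘ g^[s]` over a dyadic strip. -/
lemma strip_lintegral (s l : ℕ) (hl : l < 2^s) {f : ℝ → ℝ≥0∞} (hf : Measurable f) :
    ∫⁻ t in Ioo ((l:ℝ)/2^s) (((l:ℝ)+1)/2^s), f (g^[s] t) ∂volume
      = ENNReal.ofReal ((2:ℝ)^s)⁻¹ * ∫⁻ u in Icc (0:ℝ) 1, f u ∂volume := by
  have h2s : (0:ℝ) < 2^s := by positivity
  rcases Nat.even_or_odd l with hev | hodd
  · have hform : ∀ t ∈ Ioo ((l:ℝ)/2^s) (((l:ℝ)+1)/2^s), f (g^[s] t) = f ((2:ℝ)^s * t + (-(l:ℝ))) := by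
      intro t ht
      rw [gIter_formula s l hl t (Ioo_subset_Icc_self ht), if_pos hev]
      ring_nf
    rw [setLIntegral_congr_fun measurableSet_Ioo hform]
    have hset : Ioo ((l:ℝ)/2^s) (((l:ℝ)+1)/2^s) = (fun t => (2:ℝ)^s * t + (-(l:ℝ))) ⁻¹' Ioo 0 1 := by
      ext t
      simp only [mem_Ioo, mem_preimage]
      rw [div_lt_iff₀ h2s, lt_div_iff₀ h2s]
      constructor <;> rintro ⟨h1, h2⟩ <;> constructor <;> nlinarith
    rw [hset, lintegral_affine (ne_of_gt h2s) _ hf measurableSet_Ioo,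
      setLIntegral_congr Ioo_ae_eq_Icc]
    congr 1
    rw [abs_of_pos (by positivity)]
  · have hform : ∀ t ∈ Ioo ((l:ℝ)/2^s) (((l:ℝ)+1)/2^s),
        f (g^[s] t) = f ((-(2:ℝ)^s) * t + ((l:ℝ)+1)) := by
      intro t ht
      rw [gIter_formula s l hl t (Ioo_subset_Icc_self ht), if_neg (Nat.not_even_iff_odd.mpr hodd)]
      ring_nf
    rw [setLIntegral_congr_fun measurableSet_Ioo hform]
    have hset : Ioo ((l:ℝ)/2^s) (((l:ℝ)+1)/2^s) = (fun t => (-(2:ℝ)^s) * t + ((l:ℝ)+1)) ⁻¹' Ioo 0 1 := by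
      ext t
      simp only [mem_Ioo, mem_preimage]
      rw [div_lt_iff₀ h2s, lt_div_iff₀ h2s]
      constructor <;> rintro ⟨h1, h2⟩ <;> constructor <;> nlinarith
    rw [hset, lintegral_affine (neg_ne_zero.mpr (ne_of_gt h2s)) _ hf measurableSet_Ioo,
      setLIntegral_congr Ioo_ae_eq_Icc]
    congr 1
    rw [abs_inv, abs_neg, abs_of_pos h2s]

end WBC


namespace WBC

lemma vol_inter_Icc_eq_Ico (B : Set ℝ) (a b : ℝ) :
    volume (B ∩ Icc a b) = volume (B ∩ Ico a b) := by
  apply le_antisymm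
  · have hsub : B ∩ Icc a b ⊆ (B ∩ Ico a b) ∪ {b} := by
      rintro x ⟨hB, hx0, hx1⟩
      rcases eq_or_lt_of_le hx1 with h | h
      · exact Or.inr (by simp [h])
      · exact Or.inl ⟨hB, hx0, h⟩
    calc volume (B ∩ Icc a b) ≤ volume ((B ∩ Ico a b) ∪ {b}) := measure_mono hsub
    _ ≤ volume (B ∩ Ico a b) + volume {b} := measure_union_le _ _
    _ = volume (B ∩ Ico a b) := by simp
  · exact measure_mono (inter_subset_inter_right B Ico_subset_Icc_self)

lemma union_Ico_strips (c d : ℝ) (hd : 0 ≤ d) (K : ℕ) :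
    (⋃ l ∈ Finset.range K, Ico (c + l*d) (c + (l+1)*d)) = Ico c (c + K*d) := by
  induction K with
  | zero => simp
  | succ K ih =>
    rw [Finset.range_add_one, Finset.set_biUnion_insert, ih, Set.union_comm]
    have h1 : c ≤ c + K*d := by nlinarith
    have h2 : c + K*d ≤ c + (K+1)*d := by nlinarith
    have h3 := Set.Ico_union_Ico_eq_Ico h1 h2
    rw [h3]
    norm_num [Nat.cast_succ]

lemma sum_vol_strips (c d : ℝ) (hd : 0 ≤ d) (K : ℕ) {B : Set ℝ} (hB : MeasurableSet B) :
    ∑ l ∈ Finset.range K, volume (B ∩ Icc (c + l*d) (c + (l+1)*d))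
      = volume (B ∩ Icc c (c + K*d)) := by
  rw [vol_inter_Icc_eq_Ico, Finset.sum_congr rfl (fun l _ => vol_inter_Icc_eq_Ico B _ _),
    ← union_Ico_strips c d hd K, Set.inter_iUnion₂,
    measure_biUnion_finset ?_ (fun l _ => hB.inter measurableSet_Ico)]
  intro i _ j _ hij
  apply Disjoint.mono inter_subset_right inter_subset_right
  have key : ∀ p q : ℕ, p < q → Disjoint (Ico (c+(p:ℝ)*d) (c+((p:ℝ)+1)*d))
      (Ico (c+(q:ℝ)*d) (c+((q:ℝ)+1)*d)) := by
    intro p q hpq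
    apply Set.Ico_disjoint_Ico.mpr
    have hpq1 : (p:ℝ) + 1 ≤ q := by exact_mod_cast hpq
    refine le_trans (min_le_left _ _) (le_trans ?_ (le_max_right _ _))
    nlinarith
  rcases lt_or_gt_of_ne hij with h | h
  · exact key i j h
  · exact (key j i h).symm

end WBC


namespace WBC

lemma hist1M_density_measurable (n : ℕ) (W : Fin n → ℝ) :
    Measurable (fun x : ℝ => ∑ k : Fin n, Set.indicator (Set.Icc ((k : ℝ) / n) (((k : ℝ) + 1) / n))
      (fun _ => ENNReal.ofReal (W k)) x) :=
  Finset.measurable_sum _ fun k _ => measurable_const.indicator measurableSet_Icc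

/-- Integrating against a 1-d histogram measure. -/
lemma hist_lintegral (n : ℕ) (W : Fin n → ℝ) {f : ℝ → ℝ≥0∞} (hf : Measurable f) :
    ∫⁻ y, f y ∂(hist1M n W)
      = ∑ i : Fin n, ENNReal.ofReal (W i) * ∫⁻ y in Icc ((i:ℝ)/n) (((i:ℝ)+1)/n), f y ∂volume := by
  rw [hist1M, lintegral_withDensity_eq_lintegral_mul _ (hist1M_density_measurable n W) hf]
  have hpt : ∀ y : ℝ, ((fun x => ∑ k : Fin n, Set.indicator (Set.Icc ((k : ℝ) / n) (((k : ℝ) + 1) / n))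
      (fun _ => ENNReal.ofReal (W k)) x) * f) y
      = ∑ i : Fin n, Set.indicator (Icc ((i:ℝ)/n) (((i:ℝ)+1)/n))
          (fun y' => ENNReal.ofReal (W i) * f y') y := by
    intro y
    simp only [Pi.mul_apply, Finset.sum_mul]
    refine Finset.sum_congr rfl fun i _ => ?_
    rw [← Set.indicator_mul_left]
  rw [lintegral_congr hpt, lintegral_finset_sum _ (f := fun (i : Fin n) (y : ℝ) => Set.indicator (Icc ((i:ℝ)/n) (((i:ℝ)+1)/n))
      (fun y' => ENNReal.ofReal (W i) * f y') y) (fun i _ =>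
    (measurable_const.mul hf).indicator measurableSet_Icc)]
  refine Finset.sum_congr rfl fun i _ => ?_
  rw [lintegral_indicator measurableSet_Icc, lintegral_const_mul _ hf]

lemma floor_eq_on_strip {N m : ℕ} (hN : 0 < N) {y : ℝ}
    (hy : y ∈ Ioo ((m:ℝ)/N) (((m:ℝ)+1)/N)) : ⌊(N:ℝ) * y⌋ = (m:ℤ) := by
  have hNR : (0:ℝ) < N := by exact_mod_cast hN
  obtain ⟨h1, h2⟩ := hy
  rw [div_lt_iff₀ hNR] at h1
  rw [lt_div_iff₀ hNR] at h2
  rw [Int.floor_eq_iff]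
  push_cast
  constructor
  · nlinarith
  · nlinarith

/-- The measurable equivalence `ℝ × ℝ ≃ᵐ EuclideanSpace ℝ (Fin 2)`. -/
def eE : (ℝ × ℝ) ≃ᵐ EuclideanSpace ℝ (Fin 2) :=
  (((MeasurableEquiv.toLp 2 (Fin 2 → ℝ)).symm).trans (MeasurableEquiv.piFinTwo fun _ => ℝ)).symm

lemma eE_apply (p : ℝ × ℝ) : (eE p 0 = p.1) ∧ (eE p 1 = p.2) := by
  constructor <;> rfl

lemma eE_vp : MeasurePreserving eE volume volume := by
  have h1 : MeasurePreserving (MeasurableEquiv.toLp 2 (Fin 2 → ℝ)).symm volume volume :=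
    EuclideanSpace.volume_preserving_symm_measurableEquiv_toLp (Fin 2)
  have h2 : MeasurePreserving (MeasurableEquiv.piFinTwo fun _ : Fin 2 => ℝ) volume volume :=
    MeasureTheory.volume_preserving_piFinTwo _
  exact ((h2.comp h1).symm (((MeasurableEquiv.toLp 2 (Fin 2 → ℝ)).symm).trans
    (MeasurableEquiv.piFinTwo fun _ => ℝ)))

lemma map_withDensity_equiv {α β : Type*} [MeasurableSpace α] [MeasurableSpace β]
    (e : α ≃ᵐ β) (m : Measure α) {f : β → ℝ≥0∞} (hf : Measurable f) :
    (m.withDensity (f ∘ e)).map e = (m.map e).withDensity f := by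
  ext A hA
  rw [Measure.map_apply e.measurable hA, withDensity_apply _ (e.measurable hA),
    withDensity_apply _ hA, setLIntegral_map hA hf e.measurable]
  rfl

end WBC



namespace WBC

/-- On the open tile `(i/n,(i+1)/n)`, only the `i`-th summand of `H` is active. -/
lemma H_eq {n : ℕ} (s : ℕ) (Fc : Fin n → ℝ → ℝ) (i : Fin n) {y : ℝ}
    (hy : y ∈ Ioo ((i:ℝ)/n) (((i:ℝ)+1)/n)) (hn : 1 ≤ n) :
    (∑ j : Fin n, Set.indicator (Set.Icc (0:ℝ) 1)
        (fun z => Fc j (g^[s] z)) ((n:ℝ) * y - (j:ℝ)))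
      = Fc i (g^[s] ((n:ℝ) * y + -(i:ℝ))) := by
  have hnR : (0:ℝ) < n := by exact_mod_cast hn
  obtain ⟨hy0, hy1⟩ := hy
  rw [div_lt_iff₀ hnR] at hy0
  rw [lt_div_iff₀ hnR] at hy1
  rw [Finset.sum_eq_single i]
  · rw [Set.indicator_of_mem ?_ ]
    · rw [sub_eq_add_neg]
    · constructor <;> nlinarith
  · intro j _ hj
    apply Set.indicator_of_notMem
    rcases lt_or_gt_of_ne (fun hc : (j:ℕ) = (i:ℕ) => hj (Fin.ext hc)) with hc | hc
    · have : (j:ℝ) + 1 ≤ (i:ℝ) := by exact_mod_cast hc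
      rintro ⟨-, h2⟩
      nlinarith
    · have : (i:ℝ) + 1 ≤ (j:ℝ) := by exact_mod_cast hc
      rintro ⟨h1, -⟩
      nlinarith
  · intro h
    exact absurd (Finset.mem_univ i) h

lemma strips_disjoint {N : ℕ} (hN : 0 < N) {mp mq : ℕ} (h : mp ≠ mq) :
    Disjoint (Ico ((mp:ℝ)/N) (((mp:ℝ)+1)/N)) (Ico ((mq:ℝ)/N) (((mq:ℝ)+1)/N)) := by
  have hNR : (0:ℝ) < N := by exact_mod_cast hN
  have key : ∀ p q : ℕ, p < q →
      Disjoint (Ico ((p:ℝ)/N) (((p:ℝ)+1)/N)) (Ico ((q:ℝ)/N) (((q:ℝ)+1)/N)) := by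
    intro p q hpq
    apply Set.Ico_disjoint_Ico.mpr
    have h1 : (p:ℝ) + 1 ≤ q := by exact_mod_cast hpq
    refine le_trans (min_le_left _ _) (le_trans ?_ (le_max_right _ _))
    gcongr
  rcases lt_or_gt_of_ne h with hc | hc
  · exact key _ _ hc
  · exact (key _ _ hc).symm

lemma unit_affine_vol {N : ℝ} (hN : 0 < N) (m : ℝ) {B : Set ℝ} (hB : MeasurableSet B) :
    volume ({v : ℝ | m/N + v/N ∈ B} ∩ Icc 0 1)
      = ENNReal.ofReal N * volume (B ∩ Icc (m/N) ((m+1)/N)) := by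
  have hNinvpos : (0:ℝ) < N⁻¹ := inv_pos.mpr hN
  have hNinv : N * N⁻¹ = 1 := mul_inv_cancel₀ (ne_of_gt hN)
  have hsplit : (m+1)/N = m/N + N⁻¹ := by field_simp
  have hsetid : {v : ℝ | m/N + v/N ∈ B} ∩ Icc 0 1
      = (fun v => N⁻¹ * v + m/N) ⁻¹' (B ∩ Icc (m/N) ((m+1)/N)) := by
    ext v
    simp only [mem_inter_iff, mem_setOf_eq, mem_preimage, mem_Icc]
    rw [show m/N + v/N = N⁻¹ * v + m/N by ring, hsplit]
    constructor
    · rintro ⟨hs, h0, h1'⟩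
      exact ⟨hs, by nlinarith, by nlinarith⟩
    · rintro ⟨hs, h0, h1'⟩
      exact ⟨hs, by nlinarith, by nlinarith⟩
  rw [hsetid, volume_preimage_affine (inv_ne_zero (ne_of_gt hN)) _ (hB.inter measurableSet_Icc),
    inv_inv, abs_of_pos hN]

lemma main_calc (n s : ℕ) (hn : 1 ≤ n)
    (W : Fin n → ℝ) (hW : ∀ i, 0 ≤ W i)
    (Wc : Fin n → Fin n → ℝ) (hWc : ∀ i k, 0 ≤ Wc i k)
    (Fc : Fin n → ℝ → ℝ) (hFc : ∀ i, Measurable (Fc i))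
    (hlaw : ∀ i, Uniform01.map (Fc i) = hist1M n (Wc i)) :
    ((hist1M n W).prod Uniform01).map (fun p : ℝ × ℝ =>
        (((⌊((n * 2^s : ℕ) : ℝ) * p.1⌋ : ℤ) : ℝ) / ((n * 2^s : ℕ) : ℝ)
            + p.2 / ((n * 2^s : ℕ) : ℝ),
          ∑ i : Fin n, Set.indicator (Set.Icc (0:ℝ) 1)
            (fun z => Fc i (g^[s] z)) ((n:ℝ) * p.1 - (i:ℝ))))
      = volume.withDensity (fun p : ℝ × ℝ => ∑ i : Fin n, ∑ k : Fin n,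
          Set.indicator (Set.Icc ((i:ℝ)/n) (((i:ℝ)+1)/n) ×ˢ Set.Icc ((k:ℝ)/n) (((k:ℝ)+1)/n))
            (fun _ => ENNReal.ofReal (W i * Wc i k)) p) := by
  classical
  set N : ℕ := n * 2^s with hNdef
  have hNpos : 0 < N := Nat.mul_pos hn (pow_pos (by norm_num) s)
  have hNR : (0:ℝ) < (N:ℝ) := by exact_mod_cast hNpos
  have hnR : (0:ℝ) < (n:ℝ) := by exact_mod_cast hn
  have h2sR : (0:ℝ) < (2:ℝ)^s := by positivity
  have hNcast : ((N:ℕ):ℝ) = (n:ℝ) * 2^s := by rw [hNdef]; push_cast; ring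
  set K2 : ℝ × ℝ → ℝ × ℝ := fun p =>
    (((⌊(N:ℝ) * p.1⌋ : ℤ) : ℝ) / (N:ℝ) + p.2 / (N:ℝ),
      ∑ i : Fin n, Set.indicator (Set.Icc (0:ℝ) 1)
        (fun z => Fc i (g^[s] z)) ((n:ℝ) * p.1 - (i:ℝ))) with hK2
  have hHmeas : Measurable (fun y : ℝ => ∑ i : Fin n, Set.indicator (Set.Icc (0:ℝ) 1)
      (fun z => Fc i (g^[s] z)) ((n:ℝ) * y - (i:ℝ))) := by
    apply Finset.measurable_sum
    intro i _
    exact (((hFc i).comp (measurable_gIter s)).indicator measurableSet_Icc).comp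
      ((measurable_const.mul measurable_id).sub measurable_const)
  have hK2meas : Measurable K2 := by
    apply Measurable.prod
    · exact ((measurable_from_top.comp
        ((measurable_const.mul measurable_fst).floor)).div_const _).add
        (measurable_snd.div_const _)
    · exact hHmeas.comp measurable_fst
  refine Measure.ext fun S hS => ?_
  have hT : MeasurableSet (K2 ⁻¹' S) := hK2meas hS
  have hfS : Measurable (fun y : ℝ => Uniform01 (Prod.mk y ⁻¹' (K2 ⁻¹' S))) :=
    measurable_measure_prodMk_left hT
  have hsec : ∀ r : ℝ, MeasurableSet {y : ℝ | (y, r) ∈ S} :=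
    fun r => (measurable_id.prodMk measurable_const) hS
  have hVmeas : ∀ (A : Set ℝ), MeasurableSet A →
      Measurable (fun r : ℝ => volume ({y : ℝ | (y, r) ∈ S} ∩ A)) := by
    intro A hA
    have hrw : ∀ r : ℝ, {y : ℝ | (y, r) ∈ S} ∩ A
        = Prod.mk r ⁻¹' (Prod.swap ⁻¹' S ∩ ((univ : Set ℝ) ×ˢ A)) := by
      intro r; ext y
      simp only [mem_inter_iff, mem_setOf_eq, mem_preimage, Prod.swap_prod_mk, mem_prod,
        mem_univ, true_and]
    simp_rw [hrw]
    exact measurable_measure_prodMk_left ((measurable_swap hS).inter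
      (MeasurableSet.univ.prod hA))
  rw [Measure.map_apply hK2meas hS, Measure.prod_apply hT, hist_lintegral n W hfS]
  -- evaluate the left side tile by tile
  have tile_eval : ∀ i : Fin n,
      ∫⁻ y in Icc ((i:ℝ)/n) (((i:ℝ)+1)/n), Uniform01 (Prod.mk y ⁻¹' (K2 ⁻¹' S)) ∂volume
      = ∑ l ∈ Finset.range (2^s),
          ∫⁻ y in Ioo ((((i:ℕ)*2^s+l : ℕ):ℝ)/(N:ℝ)) (((((i:ℕ)*2^s+l : ℕ):ℝ)+1)/(N:ℝ)),
            Uniform01 (Prod.mk y ⁻¹' (K2 ⁻¹' S)) ∂volume := by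
    intro i
    have hunion : Ico ((i:ℝ)/n) (((i:ℝ)+1)/n)
        = ⋃ l ∈ Finset.range (2^s),
            Ico ((((i:ℕ)*2^s+l : ℕ):ℝ)/(N:ℝ)) (((((i:ℕ)*2^s+l : ℕ):ℝ)+1)/(N:ℝ)) := by
      have hend : ((i:ℝ)+1)/n = (i:ℝ)/n + ((2^s : ℕ):ℝ)*(1/(N:ℝ)) := by
        rw [hNcast]; push_cast; field_simp
      have h1 : Ico ((i:ℝ)/n) (((i:ℝ)+1)/n)
          = Ico ((i:ℝ)/n) ((i:ℝ)/n + ((2^s : ℕ):ℝ)*(1/(N:ℝ))) := by rw [← hend]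
      rw [h1, ← union_Ico_strips ((i:ℝ)/n) (1/(N:ℝ)) (by positivity) (2^s)]
      refine Set.iUnion₂_congr fun l hl => ?_
      have he1 : (((i:ℕ)*2^s+l : ℕ):ℝ)/(N:ℝ) = (i:ℝ)/n + (l:ℝ)*(1/(N:ℝ)) := by
        rw [hNcast]; push_cast; field_simp
      have he2 : ((((i:ℕ)*2^s+l : ℕ):ℝ)+1)/(N:ℝ) = (i:ℝ)/n + ((l:ℝ)+1)*(1/(N:ℝ)) := by
        rw [hNcast]; push_cast; field_simp; ring
      rw [he1, he2]
    rw [← setLIntegral_congr (Ico_ae_eq_Icc), hunion,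
      lintegral_biUnion_finset ?_ (fun l _ => measurableSet_Ico) _]
    · refine Finset.sum_congr rfl fun l hl => (setLIntegral_congr (Ioo_ae_eq_Ico)).symm
    · intro p hp q hq hpq
      simp only [Finset.coe_range, mem_Iio] at hp hq
      exact strips_disjoint hNpos (by omega : (i:ℕ)*2^s+p ≠ (i:ℕ)*2^s+q)
  have hei : ∀ (i : Fin n) (l : ℕ), (((i:ℕ)*2^s+l : ℕ):ℝ)/(N:ℝ) = (i:ℝ)/n + (l:ℝ)*(1/(N:ℝ)) := by
    intro i l
    rw [hNcast]; push_cast; field_simp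
  have hei2 : ∀ (i : Fin n) (l : ℕ),
      ((((i:ℕ)*2^s+l : ℕ):ℝ)+1)/(N:ℝ) = (i:ℝ)/n + ((l:ℝ)+1)*(1/(N:ℝ)) := by
    intro i l
    rw [hNcast]; push_cast; field_simp; ring
  have hend : ∀ i : Fin n, (i:ℝ)/n + ((2^s : ℕ):ℝ)*(1/(N:ℝ)) = ((i:ℝ)+1)/n := by
    intro i
    rw [hNcast]; push_cast; field_simp
  have strip_eval : ∀ (i : Fin n) (l : ℕ), l < 2^s →
      ∫⁻ y in Ioo ((((i:ℕ)*2^s+l : ℕ):ℝ)/(N:ℝ)) (((((i:ℕ)*2^s+l : ℕ):ℝ)+1)/(N:ℝ)),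
          Uniform01 (Prod.mk y ⁻¹' (K2 ⁻¹' S)) ∂volume
      = ∑ k : Fin n, ENNReal.ofReal (Wc i k) *
          ∫⁻ r in Icc ((k:ℝ)/n) (((k:ℝ)+1)/n),
            volume ({y : ℝ | (y, r) ∈ S}
              ∩ Icc ((((i:ℕ)*2^s+l : ℕ):ℝ)/(N:ℝ)) (((((i:ℕ)*2^s+l : ℕ):ℝ)+1)/(N:ℝ))) ∂volume := by
    intro i l hl
    set m : ℕ := (i:ℕ)*2^s + l with hm
    set Gm : ℝ → ℝ≥0∞ := fun r =>
      Uniform01 {v : ℝ | ((m:ℝ)/(N:ℝ) + v/(N:ℝ), r) ∈ S} with hGmdef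
    have hGm : Measurable Gm := by
      have hQ : MeasurableSet ((fun q : ℝ × ℝ => ((m:ℝ)/(N:ℝ) + q.2/(N:ℝ), q.1)) ⁻¹' S) :=
        ((measurable_const.add (measurable_snd.div_const _)).prodMk measurable_fst) hS
      exact measurable_measure_prodMk_left hQ
    have hmc : (m:ℝ) = (i:ℝ)*2^s + (l:ℝ) := by rw [hm]; push_cast; ring
    have hsub : Ioo ((m:ℝ)/(N:ℝ)) (((m:ℝ)+1)/(N:ℝ)) ⊆ Ioo ((i:ℝ)/n) (((i:ℝ)+1)/n) := by
      apply Set.Ioo_subset_Ioo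
      · rw [hNcast, hmc, div_le_div_iff₀ hnR (by positivity)]
        nlinarith [Nat.cast_nonneg (α := ℝ) l]
      · rw [hNcast, hmc, div_le_div_iff₀ (by positivity) hnR]
        have hl1 : (l:ℝ) + 1 ≤ 2^s := by exact_mod_cast hl
        nlinarith
    have hpt : ∀ y ∈ Ioo ((m:ℝ)/(N:ℝ)) (((m:ℝ)+1)/(N:ℝ)),
        Uniform01 (Prod.mk y ⁻¹' (K2 ⁻¹' S)) = Gm (Fc i (g^[s] ((n:ℝ)*y + -(i:ℝ)))) := by
      intro y hy
      have hfl : ((⌊(N:ℝ)*y⌋ : ℤ) : ℝ) = (m:ℝ) := by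
        rw [floor_eq_on_strip hNpos hy]
        norm_num
      have hHy : (∑ j : Fin n, Set.indicator (Set.Icc (0:ℝ) 1)
          (fun z => Fc j (g^[s] z)) ((n:ℝ)*y - (j:ℝ)))
          = Fc i (g^[s] ((n:ℝ)*y + -(i:ℝ))) := H_eq s Fc i (hsub hy) hn
      have hset : Prod.mk y ⁻¹' (K2 ⁻¹' S)
          = {v : ℝ | ((m:ℝ)/(N:ℝ) + v/(N:ℝ), Fc i (g^[s] ((n:ℝ)*y + -(i:ℝ)))) ∈ S} := by
        ext v
        simp only [mem_preimage, hK2, mem_setOf_eq]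
        rw [hfl, hHy]
      rw [hset]
    rw [setLIntegral_congr_fun measurableSet_Ioo hpt]
    have hpre : Ioo ((m:ℝ)/(N:ℝ)) (((m:ℝ)+1)/(N:ℝ))
        = (fun y => (n:ℝ)*y + -(i:ℝ)) ⁻¹' Ioo ((l:ℝ)/2^s) (((l:ℝ)+1)/2^s) := by
      ext y
      simp only [mem_Ioo, mem_preimage]
      rw [div_lt_iff₀ hNR, lt_div_iff₀ hNR, div_lt_iff₀ h2sR, lt_div_iff₀ h2sR, hNcast, hmc]
      constructor <;> rintro ⟨h1, h2⟩ <;> constructor <;> nlinarith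
    rw [hpre, lintegral_affine (ne_of_gt hnR) (-(i:ℝ))
      (f := fun u => Gm (Fc i (g^[s] u)))
      ((hGm.comp (hFc i)).comp (measurable_gIter s)) measurableSet_Ioo]
    rw [strip_lintegral s l hl (f := fun u => Gm (Fc i u)) (hGm.comp (hFc i))]
    have hmap : ∫⁻ u in Icc (0:ℝ) 1, Gm (Fc i u) ∂volume
        = ∑ k : Fin n, ENNReal.ofReal (Wc i k) *
            ∫⁻ r in Icc ((k:ℝ)/n) (((k:ℝ)+1)/n), Gm r ∂volume := by
      have h0 : ∫⁻ u in Icc (0:ℝ) 1, Gm (Fc i u) ∂volume = ∫⁻ u, Gm (Fc i u) ∂Uniform01 := rfl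
      rw [h0, ← lintegral_map hGm (hFc i), hlaw i, hist_lintegral n (Wc i) hGm]
    rw [hmap]
    have hGmval : ∀ r : ℝ, Gm r = ENNReal.ofReal (N:ℝ) *
        volume ({y : ℝ | (y, r) ∈ S} ∩ Icc ((m:ℝ)/(N:ℝ)) (((m:ℝ)+1)/(N:ℝ))) := by
      intro r
      have h1 : Gm r = volume ({v : ℝ | ((m:ℝ)/(N:ℝ) + v/(N:ℝ), r) ∈ S} ∩ Icc 0 1) :=
        Measure.restrict_apply' measurableSet_Icc
      rw [h1]
      exact unit_affine_vol hNR (m:ℝ) (hsec r)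
    have hfin : ∀ k : Fin n, ∫⁻ r in Icc ((k:ℝ)/n) (((k:ℝ)+1)/n), Gm r ∂volume
        = ENNReal.ofReal (N:ℝ) * ∫⁻ r in Icc ((k:ℝ)/n) (((k:ℝ)+1)/n),
            volume ({y : ℝ | (y, r) ∈ S} ∩ Icc ((m:ℝ)/(N:ℝ)) (((m:ℝ)+1)/(N:ℝ))) ∂volume := by
      intro k
      rw [lintegral_congr hGmval]
      exact lintegral_const_mul _ (hVmeas _ measurableSet_Icc)
    have hpull : ∑ k : Fin n, ENNReal.ofReal (Wc i k) *
        ∫⁻ r in Icc ((k:ℝ)/n) (((k:ℝ)+1)/n), Gm r ∂volume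
        = ENNReal.ofReal (N:ℝ) * ∑ k : Fin n, ENNReal.ofReal (Wc i k) *
          ∫⁻ r in Icc ((k:ℝ)/n) (((k:ℝ)+1)/n),
            volume ({y : ℝ | (y, r) ∈ S} ∩ Icc ((m:ℝ)/(N:ℝ)) (((m:ℝ)+1)/(N:ℝ))) ∂volume := by
      rw [Finset.mul_sum]
      refine Finset.sum_congr rfl fun k _ => ?_
      rw [hfin k]
      ring
    rw [hpull, ← mul_assoc, ← mul_assoc, ← ENNReal.ofReal_mul (abs_nonneg _),
      ← ENNReal.ofReal_mul (by positivity)]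
    rw [show |((n:ℝ))⁻¹| * ((2:ℝ)^s)⁻¹ * (N:ℝ) = 1 by
      rw [hNcast, abs_of_pos (inv_pos.mpr hnR)]; field_simp]
    rw [ENNReal.ofReal_one, one_mul]
  have LHS_eq : ∑ i : Fin n, ENNReal.ofReal (W i) *
      ∫⁻ y in Icc ((i:ℝ)/n) (((i:ℝ)+1)/n), Uniform01 (Prod.mk y ⁻¹' (K2 ⁻¹' S)) ∂volume
      = ∑ i : Fin n, ∑ k : Fin n, ENNReal.ofReal (W i * Wc i k) *
          ∫⁻ r in Icc ((k:ℝ)/n) (((k:ℝ)+1)/n),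
            volume ({y : ℝ | (y, r) ∈ S} ∩ Icc ((i:ℝ)/n) (((i:ℝ)+1)/n)) ∂volume := by
    refine Finset.sum_congr rfl fun i _ => ?_
    rw [tile_eval i,
      Finset.sum_congr rfl (fun l hl => strip_eval i l (Finset.mem_range.mp hl)),
      Finset.sum_comm, Finset.mul_sum]
    refine Finset.sum_congr rfl fun k _ => ?_
    have hsum : ∑ l ∈ Finset.range (2^s),
        (ENNReal.ofReal (Wc i k) * ∫⁻ r in Icc ((k:ℝ)/n) (((k:ℝ)+1)/n),
          volume ({y : ℝ | (y, r) ∈ S}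
            ∩ Icc ((((i:ℕ)*2^s+l : ℕ):ℝ)/(N:ℝ)) (((((i:ℕ)*2^s+l : ℕ):ℝ)+1)/(N:ℝ))) ∂volume)
        = ENNReal.ofReal (Wc i k) * ∫⁻ r in Icc ((k:ℝ)/n) (((k:ℝ)+1)/n),
            volume ({y : ℝ | (y, r) ∈ S} ∩ Icc ((i:ℝ)/n) (((i:ℝ)+1)/n)) ∂volume := by
      rw [← Finset.mul_sum]
      congr 1
      rw [← lintegral_finset_sum _ (fun l _ => hVmeas _ measurableSet_Icc)]
      refine setLIntegral_congr_fun measurableSet_Icc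
        (fun r _ => ?_)
      have hps := sum_vol_strips ((i:ℝ)/n) (1/(N:ℝ)) (by positivity) (2^s) (hsec r)
      calc ∑ l ∈ Finset.range (2^s), volume ({y : ℝ | (y, r) ∈ S}
              ∩ Icc ((((i:ℕ)*2^s+l : ℕ):ℝ)/(N:ℝ)) (((((i:ℕ)*2^s+l : ℕ):ℝ)+1)/(N:ℝ)))
          = ∑ l ∈ Finset.range (2^s), volume ({y : ℝ | (y, r) ∈ S}
              ∩ Icc ((i:ℝ)/n + (l:ℝ)*(1/(N:ℝ))) ((i:ℝ)/n + ((l:ℝ)+1)*(1/(N:ℝ)))) := by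
            refine Finset.sum_congr rfl fun l _ => ?_
            rw [hei i l, hei2 i l]
        _ = volume ({y : ℝ | (y, r) ∈ S} ∩ Icc ((i:ℝ)/n) ((i:ℝ)/n + ((2^s:ℕ):ℝ)*(1/(N:ℝ)))) := hps
        _ = volume ({y : ℝ | (y, r) ∈ S} ∩ Icc ((i:ℝ)/n) (((i:ℝ)+1)/n)) := by rw [hend i]
    rw [hsum, ← mul_assoc, ← ENNReal.ofReal_mul (hW i)]
  rw [LHS_eq]
  -- now evaluate the density side
  have hmeas1 : ∀ (i k : Fin n), Measurable (Set.indicator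
      (Icc ((i:ℝ)/n) (((i:ℝ)+1)/n) ×ˢ Icc ((k:ℝ)/n) (((k:ℝ)+1)/n))
      (fun _ : ℝ × ℝ => ENNReal.ofReal (W i * Wc i k))) :=
    fun i k => measurable_const.indicator (measurableSet_Icc.prod measurableSet_Icc)
  rw [withDensity_apply _ hS,
    lintegral_finset_sum _ (fun i _ => Finset.measurable_sum _ fun k _ => hmeas1 i k)]
  refine Finset.sum_congr rfl fun i _ => ?_
  rw [lintegral_finset_sum _ (fun k _ => hmeas1 i k)]
  refine Finset.sum_congr rfl fun k _ => ?_
  rw [lintegral_indicator (measurableSet_Icc.prod measurableSet_Icc),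
    setLIntegral_const, Measure.restrict_apply (measurableSet_Icc.prod measurableSet_Icc)]
  congr 1
  rw [Measure.volume_eq_prod,
    Measure.prod_apply_symm ((measurableSet_Icc.prod measurableSet_Icc).inter hS)]
  have hpt2 : ∀ r : ℝ, volume ((fun x => (x, r)) ⁻¹'
      ((Icc ((i:ℝ)/n) (((i:ℝ)+1)/n) ×ˢ Icc ((k:ℝ)/n) (((k:ℝ)+1)/n)) ∩ S))
      = Set.indicator (Icc ((k:ℝ)/n) (((k:ℝ)+1)/n))
          (fun r' => volume ({y : ℝ | (y, r') ∈ S} ∩ Icc ((i:ℝ)/n) (((i:ℝ)+1)/n))) r := by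
    intro r
    by_cases hr : r ∈ Icc ((k:ℝ)/n) (((k:ℝ)+1)/n)
    · rw [Set.indicator_of_mem hr]
      congr 1
      ext y
      simp only [mem_preimage, mem_inter_iff, mem_prod, mem_setOf_eq]
      constructor
      · rintro ⟨⟨h1, h2⟩, h3⟩; exact ⟨h3, h1⟩
      · rintro ⟨h3, h1⟩; exact ⟨⟨h1, hr⟩, h3⟩
    · rw [Set.indicator_of_notMem hr]
      have hempty : (fun x : ℝ => (x, r)) ⁻¹'
          ((Icc ((i:ℝ)/n) (((i:ℝ)+1)/n) ×ˢ Icc ((k:ℝ)/n) (((k:ℝ)+1)/n)) ∩ S) = ∅ := by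
        ext y
        simp only [mem_preimage, mem_inter_iff, mem_prod, mem_empty_iff_false, iff_false,
          not_and]
        intro h
        exact absurd h.2 hr
      rw [hempty, measure_empty]
  rw [lintegral_congr hpt2, lintegral_indicator measurableSet_Icc]

end WBC

namespace WBC

lemma edist_eE (a b c : ℝ) : edist (eE (a,c)) (eE (b,c)) = ENNReal.ofReal |a - b| := by
  rw [edist_dist, EuclideanSpace.dist_eq, Fin.sum_univ_two,
    show eE (a,c) 0 = a from rfl, show eE (b,c) 0 = b from rfl,
    show eE (a,c) 1 = c from rfl, show eE (b,c) 1 = c from rfl,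
    dist_self, Real.dist_eq]
  norm_num
  exact Real.sqrt_sq_eq_abs _

lemma tile2_measurable (n : ℕ) (k1 k2 : Fin n) : MeasurableSet (tile2 n k1 k2) := by
  have h : tile2 n k1 k2
      = (fun x : EuclideanSpace ℝ (Fin 2) => x 0) ⁻¹' (Icc ((k1:ℝ)/n) (((k1:ℝ)+1)/n))
        ∩ (fun x : EuclideanSpace ℝ (Fin 2) => x 1) ⁻¹' (Icc ((k2:ℝ)/n) (((k2:ℝ)+1)/n)) := rfl
  rw [h]
  have hm : ∀ j : Fin 2, Measurable (fun x : EuclideanSpace ℝ (Fin 2) => x j) := by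
    intro j
    exact (measurable_pi_apply j).comp (MeasurableEquiv.toLp 2 (Fin 2 → ℝ)).symm.measurable
  exact ((hm 0) measurableSet_Icc).inter ((hm 1) measurableSet_Icc)

end WBC

open WBC

theorem wasserstein_bound_of_construction
    (n : ℕ) (hn : 1 ≤ n) (w : Fin n → Fin n → ℝ)
    (hw : ∀ k1 k2, 0 < w k1 k2) (hsum : ∑ k1, ∑ k2, w k1 k2 = (n : ℝ) ^ 2)
    -- φ_marg ∈ Σ_{n-1} with φ_marg # U = P_marg :
    (φmarg : ℝ → ℝ) (hφm : PiecewiseAffineOn φmarg (n - 1))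
    (hφm' : Set.MapsTo φmarg (Set.Icc 0 1) (Set.Icc 0 1))
    (hmarg : Measure.map φmarg Uniform01 = hist1M n fun k => (∑ j, w k j) / n)
    -- φ_i ∈ Σ_{n-1} with φ_i # U = P_i :
    (φc : Fin n → ℝ → ℝ) (hφc : ∀ i, PiecewiseAffineOn (φc i) (n - 1))
    (hφc' : ∀ i, Set.MapsTo (φc i) (Set.Icc 0 1) (Set.Icc 0 1))
    (hcond : ∀ i, Measure.map (φc i) Uniform01
      = hist1M n fun k => (n : ℝ) * w i k / ∑ j, w i j)
    (s : ℕ) :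
    wass (hist2M n w)
      (Uniform01.map fun x : ℝ =>
        (WithLp.toLp 2 (![φmarg x,
            ∑ i : Fin n, Set.indicator (Set.Icc 0 1) (fun y => φc i (g^[s] y))
              ((n : ℝ) * φmarg x - (i : ℝ))] : Fin 2 → ℝ) : EuclideanSpace ℝ (Fin 2))) ≤
      ENNReal.ofReal (2 * Real.sqrt 2 / ((n : ℝ) * 2 ^ s)) := by
  classical
  obtain ⟨F, hFmeas, hFeq⟩ := exists_measurable_agree hφm
  choose Fc hFcmeas hFceq using fun i => exists_measurable_agree (hφc i)
  have haeIcc : ∀ᵐ x ∂Uniform01, x ∈ Set.Icc (0:ℝ) 1 := by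
    rw [Uniform01]
    exact ae_restrict_mem measurableSet_Icc
  have haeF : φmarg =ᵐ[Uniform01] F := haeIcc.mono fun x hx => (hFeq x hx).symm
  have hmargF : Measure.map F Uniform01 = hist1M n (fun k => (∑ j, w k j) / n) := by
    rw [← Measure.map_congr haeF]; exact hmarg
  have hcondF : ∀ i, Measure.map (Fc i) Uniform01
      = hist1M n (fun k => (n:ℝ) * w i k / ∑ j, w i j) := by
    intro i
    have h := haeIcc.mono fun x hx => (hFceq i x hx).symm
    rw [← Measure.map_congr h]; exact hcond i
  have hnR : (0:ℝ) < (n:ℝ) := by exact_mod_cast hn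
  have h2sR : (0:ℝ) < (2:ℝ)^s := by positivity
  have hNR : (0:ℝ) < ((n * 2^s : ℕ) : ℝ) := by
    push_cast; positivity
  have hNcast : ((n * 2^s : ℕ) : ℝ) = (n:ℝ) * 2^s := by push_cast; ring
  -- weights
  have hsumpos : ∀ i : Fin n, 0 < ∑ j, w i j := fun i =>
    Finset.sum_pos (fun j _ => hw i j) ⟨⟨0, hn⟩, Finset.mem_univ _⟩
  have hWm0 : ∀ i : Fin n, 0 ≤ (∑ j, w i j) / n :=
    fun i => div_nonneg (hsumpos i).le (Nat.cast_nonneg n)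
  have hWc0 : ∀ i k : Fin n, 0 ≤ (n:ℝ) * w i k / ∑ j, w i j :=
    fun i k => div_nonneg (mul_nonneg (Nat.cast_nonneg n) (hw i k).le) (hsumpos i).le
  have hprodw : ∀ i k : Fin n, ((∑ j, w i j) / n) * ((n:ℝ) * w i k / ∑ j, w i j) = w i k := by
    intro i k
    have h1 : (∑ j, w i j) ≠ 0 := (hsumpos i).ne'
    have h2 : (n:ℝ) ≠ 0 := hnR.ne'
    field_simp
  -- the H function (second coordinate), measurable version
  set Hf : ℝ → ℝ := fun y => ∑ i : Fin n,
    Set.indicator (Set.Icc (0:ℝ) 1) (fun z => Fc i (g^[s] z)) ((n:ℝ) * y - (i:ℝ)) with hHf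
  have hHfmeas : Measurable Hf := by
    apply Finset.measurable_sum
    intro i _
    exact (((hFcmeas i).comp (measurable_gIter s)).indicator measurableSet_Icc).comp
      ((measurable_const.mul measurable_id).sub measurable_const)
  -- the transport map and its perturbed version
  set K2 : ℝ × ℝ → ℝ × ℝ := fun p =>
    (((⌊((n * 2^s : ℕ) : ℝ) * p.1⌋ : ℤ) : ℝ) / ((n * 2^s : ℕ) : ℝ)
        + p.2 / ((n * 2^s : ℕ) : ℝ), Hf p.1) with hK2
  have hK2meas : Measurable K2 := by
    apply Measurable.prod
    · exact ((measurable_from_top.comp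
        ((measurable_const.mul measurable_fst).floor)).div_const _).add
        (measurable_snd.div_const _)
    · exact hHfmeas.comp measurable_fst
  set Φ : ℝ → EuclideanSpace ℝ (Fin 2) := fun x => eE (F x, Hf (F x)) with hΦ
  have hΦmeas : Measurable Φ := eE.measurable.comp (hFmeas.prodMk (hHfmeas.comp hFmeas))
  -- the statement's map agrees a.e. with Φ
  have hφae : (fun x : ℝ =>
      (WithLp.toLp 2 (![φmarg x,
          ∑ i : Fin n, Set.indicator (Set.Icc 0 1) (fun y => φc i (g^[s] y))
            ((n : ℝ) * φmarg x - (i : ℝ))] : Fin 2 → ℝ) : EuclideanSpace ℝ (Fin 2)))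
      =ᵐ[Uniform01] Φ := by
    refine haeIcc.mono fun x hx => ?_
    have hFx : F x = φmarg x := hFeq x hx
    have hHeq : (∑ i : Fin n, Set.indicator (Set.Icc (0:ℝ) 1) (fun y => φc i (g^[s] y))
        ((n : ℝ) * φmarg x - (i : ℝ))) = Hf (F x) := by
      rw [hHf, hFx]
      refine Finset.sum_congr rfl fun i _ => ?_
      by_cases hmem : ((n:ℝ) * φmarg x - (i:ℝ)) ∈ Set.Icc (0:ℝ) 1
      · rw [Set.indicator_of_mem hmem, Set.indicator_of_mem hmem]
        exact (hFceq i _ (gIter_mem s hmem)).symm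
      · rw [Set.indicator_of_notMem hmem, Set.indicator_of_notMem hmem]
    ext j
    fin_cases j
    · show _ = Φ x 0
      rw [hΦ]
      show _ = F x
      rw [hFx]
      rfl
    · show _ = Φ x 1
      rw [hΦ]
      show _ = Hf (F x)
      rw [← hHeq]
      rfl
  -- the coupling
  set G2 : ℝ × ℝ → (EuclideanSpace ℝ (Fin 2)) × (EuclideanSpace ℝ (Fin 2)) :=
    fun q => (eE (K2 (F q.1, q.2)), Φ q.1) with hG2
  have hG2meas : Measurable G2 := by
    apply Measurable.prod
    · exact eE.measurable.comp (hK2meas.comp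
        ((hFmeas.comp measurable_fst).prodMk measurable_snd))
    · exact hΦmeas.comp measurable_fst
  set π : Measure ((EuclideanSpace ℝ (Fin 2)) × (EuclideanSpace ℝ (Fin 2))) :=
    (Uniform01.prod Uniform01).map G2 with hπ
  -- second marginal
  have hsnd : π.map Prod.snd = Uniform01.map (fun x : ℝ =>
      (WithLp.toLp 2 (![φmarg x,
          ∑ i : Fin n, Set.indicator (Set.Icc 0 1) (fun y => φc i (g^[s] y))
            ((n : ℝ) * φmarg x - (i : ℝ))] : Fin 2 → ℝ) : EuclideanSpace ℝ (Fin 2))) := by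
    rw [hπ, Measure.map_map measurable_snd hG2meas]
    have hcomp : (Prod.snd ∘ G2) = Φ ∘ Prod.fst := rfl
    rw [hcomp, ← Measure.map_map hΦmeas measurable_fst, Measure.map_fst_prod,
      measure_univ, one_smul]
    exact (Measure.map_congr hφae).symm
  -- first marginal
  have hcalc := main_calc n s hn (fun k => (∑ j, w k j) / n) hWm0
    (fun i k => (n:ℝ) * w i k / ∑ j, w i j) hWc0 Fc hFcmeas hcondF
  have hfst : π.map Prod.fst = hist2M n w := by
    rw [hπ, Measure.map_map measurable_fst hG2meas]
    have hstep : (Prod.fst ∘ G2) = (⇑eE ∘ K2) ∘ (Prod.map F id) := rfl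
    rw [hstep, ← Measure.map_map (eE.measurable.comp hK2meas) (hFmeas.prodMap measurable_id),
      ← Measure.map_map eE.measurable hK2meas]
    have hprodmap : (Uniform01.prod Uniform01).map (Prod.map F id)
        = (hist1M n (fun k => (∑ j, w k j) / n)).prod Uniform01 := by
      rw [← Measure.map_prod_map _ _ hFmeas measurable_id, Measure.map_id, hmargF]
    rw [hprodmap]
    have hKeq : K2 = (fun p : ℝ × ℝ =>
        (((⌊((n * 2^s : ℕ) : ℝ) * p.1⌋ : ℤ) : ℝ) / ((n * 2^s : ℕ) : ℝ)
            + p.2 / ((n * 2^s : ℕ) : ℝ),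
          ∑ i : Fin n, Set.indicator (Set.Icc (0:ℝ) 1)
            (fun z => Fc i (g^[s] z)) ((n:ℝ) * p.1 - (i:ℝ)))) := rfl
    rw [hKeq, hcalc]
    have hD2 : (fun p : ℝ × ℝ => ∑ i : Fin n, ∑ k : Fin n,
        Set.indicator (Set.Icc ((i:ℝ)/n) (((i:ℝ)+1)/n) ×ˢ Set.Icc ((k:ℝ)/n) (((k:ℝ)+1)/n))
          (fun _ => ENNReal.ofReal (((∑ j, w i j) / n) * ((n:ℝ) * w i k / ∑ j, w i j))) p)
        = (fun x : EuclideanSpace ℝ (Fin 2) => ∑ k1 : Fin n, ∑ k2 : Fin n,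
            Set.indicator (tile2 n k1 k2) (fun _ => ENNReal.ofReal (w k1 k2)) x) ∘ ⇑eE := by
      funext p
      simp only [Function.comp_apply]
      refine Finset.sum_congr rfl fun i _ => Finset.sum_congr rfl fun k _ => ?_
      have hmem : eE p ∈ tile2 n i k ↔
          p ∈ Set.Icc ((i:ℝ)/n) (((i:ℝ)+1)/n) ×ˢ Set.Icc ((k:ℝ)/n) (((k:ℝ)+1)/n) := by
        constructor
        · rintro ⟨h1, h2⟩; exact ⟨h1, h2⟩
        · rintro ⟨h1, h2⟩; exact ⟨h1, h2⟩
      rw [hprodw i k]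
      by_cases hp : p ∈ Set.Icc ((i:ℝ)/n) (((i:ℝ)+1)/n) ×ˢ Set.Icc ((k:ℝ)/n) (((k:ℝ)+1)/n)
      · rw [Set.indicator_of_mem hp, Set.indicator_of_mem (hmem.mpr hp)]
      · rw [Set.indicator_of_notMem hp, Set.indicator_of_notMem (fun hc => hp (hmem.mp hc))]
    rw [hD2, map_withDensity_equiv eE _ (Finset.measurable_sum _ fun k1 _ =>
      Finset.measurable_sum _ fun k2 _ =>
        measurable_const.indicator (tile2_measurable n k1 k2)), eE_vp.map_eq]
    rfl
  -- the transport cost bound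
  have hbound : ∫⁻ p, edist p.1 p.2 ∂π ≤ ENNReal.ofReal (2 * Real.sqrt 2 / ((n:ℝ) * 2^s)) := by
    rw [hπ, lintegral_map measurable_edist hG2meas]
    have hae2 : ∀ᵐ q ∂(Uniform01.prod Uniform01), q.2 ∈ Set.Icc (0:ℝ) 1 := by
      rw [ae_iff]
      have hset : {q : ℝ × ℝ | ¬ q.2 ∈ Set.Icc (0:ℝ) 1}
          = (univ : Set ℝ) ×ˢ (Set.Icc (0:ℝ) 1)ᶜ := by
        ext q; simp [Set.mem_prod]
      rw [hset, Measure.prod_prod]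
      have h0 : Uniform01 ((Set.Icc (0:ℝ) 1)ᶜ) = 0 := by
        rw [Uniform01, Measure.restrict_apply measurableSet_Icc.compl]
        simp
      rw [h0, mul_zero]
    have hptb : ∀ q : ℝ × ℝ, q.2 ∈ Set.Icc (0:ℝ) 1 →
        edist (G2 q).1 (G2 q).2 ≤ ENNReal.ofReal (1 / ((n:ℝ) * 2^s)) := by
      intro q hq
      obtain ⟨hv0, hv1⟩ := hq
      have hG2q : (G2 q).1 = eE (((⌊((n * 2^s : ℕ) : ℝ) * (F q.1)⌋ : ℤ) : ℝ) / ((n * 2^s : ℕ) : ℝ)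
          + q.2 / ((n * 2^s : ℕ) : ℝ), Hf (F q.1)) := rfl
      have hG2q2 : (G2 q).2 = eE (F q.1, Hf (F q.1)) := rfl
      rw [hG2q, hG2q2, edist_eE]
      apply ENNReal.ofReal_le_ofReal
      have h1 : ((⌊((n * 2^s : ℕ) : ℝ) * (F q.1)⌋ : ℤ) : ℝ) ≤ ((n * 2^s : ℕ) : ℝ) * (F q.1) :=
        Int.floor_le _
      have h2 : ((n * 2^s : ℕ) : ℝ) * (F q.1)
          < ((⌊((n * 2^s : ℕ) : ℝ) * (F q.1)⌋ : ℤ) : ℝ) + 1 := Int.lt_floor_add_one _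
      have hNinv : (0:ℝ) < 1 / ((n * 2^s : ℕ) : ℝ) := by positivity
      have hAB : ((⌊((n * 2^s : ℕ) : ℝ) * (F q.1)⌋ : ℤ) : ℝ) / ((n * 2^s : ℕ) : ℝ)
            + q.2 / ((n * 2^s : ℕ) : ℝ) - F q.1
          = (((⌊((n * 2^s : ℕ) : ℝ) * (F q.1)⌋ : ℤ) : ℝ) - ((n * 2^s : ℕ) : ℝ) * (F q.1) + q.2)
            * (1 / ((n * 2^s : ℕ) : ℝ)) := by
        field_simp
        ring
      rw [← hNcast, abs_le]
      constructor
      · rw [hAB]; nlinarith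
      · rw [hAB]; nlinarith
    refine le_trans (lintegral_mono_ae (hae2.mono fun q hq => hptb q hq)) ?_
    rw [lintegral_const, measure_univ, mul_one]
    apply ENNReal.ofReal_le_ofReal
    gcongr
    have hs2 : (1:ℝ) ≤ Real.sqrt 2 := Real.one_le_sqrt.mpr (by norm_num)
    nlinarith [Real.sqrt_nonneg 2]
  exact le_trans (iInf₂_le π ⟨hfst, hsnd⟩) hbound
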